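/- An integrally closed integral domain R is a Prüfer domain if and only if every simple overring R[u] (u in the quotient field K of R) is an intersection of localizations of R at prime ideals. -/

import Mathlib

noncomputable section

/-- The image of `A` in `L` under the algebra map, as a set. -/
def imageR (A L : Type*) [CommRing A] [CommRing L] [Algebra A L] : Set L :=
  Set.range (algebraMap A L)

/-- The Kaplansky transform of an ideal `I` of `A`, computed inside `L`. -/
def omegaSet (A L : Type*) [CommRing A] [CommRing L] [Algebra A L] (I : Ideal A) : Set L :=
  {x : L | ∀ a ∈ I, ∃ n : ℕ, 1 ≤ n ∧ ∃ r : A, (algebraMap A L a) ^ n * x = algebraMap A L r}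

/-- The localization of `A` at the prime `P`, viewed as a subset of `L`. -/
def locSet (A L : Type*) [CommRing A] [CommRing L] [Algebra A L] (P : Ideal A) : Set L :=
  {x : L | ∃ s : A, s ∉ P ∧ ∃ r : A, x * algebraMap A L s = algebraMap A L r}

/-- The conductor ideal `(A :_A U) = {r : A | r • U ⊆ A}`. -/
def condIdeal (A L : Type*) [CommRing A] [CommRing L] [Algebra A L] (U : Set L) : Ideal A where
  carrier := {r : A | ∀ u ∈ U, ∃ r' : A, algebraMap A L r * u = algebraMap A L r'}
  zero_mem' := fun u _ => ⟨0, by simp⟩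
  add_mem' := by
    rintro a b ha hb u hu
    obtain ⟨a', ha'⟩ := ha u hu
    obtain ⟨b', hb'⟩ := hb u hu
    exact ⟨a' + b', by rw [map_add, map_add, add_mul, ha', hb']⟩
  smul_mem' := by
    rintro c r h u hu
    obtain ⟨r', hr'⟩ := h u hu
    exact ⟨c * r', by rw [smul_eq_mul, map_mul, map_mul, mul_assoc, hr']⟩

/-- A domain is an sQQR-domain if every simple overring `R[u]`, `u` in the quotient field,
is an intersection of localizations of `R` at primes. -/
def IsSQQR (A : Type*) [CommRing A] [IsDomain A] : Prop :=
  ∀ u : FractionRing A, ∃ Ps : Set (Ideal A), (∀ P ∈ Ps, P.IsPrime) ∧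
    (↑(Algebra.adjoin A {u} : Subalgebra A (FractionRing A)) : Set (FractionRing A)) =
      ⋂ P ∈ Ps, locSet A (FractionRing A) P

/-- A Prüfer domain: every localization at a prime is a valuation domain. -/
def IsPrufer (A : Type*) [CommRing A] [IsDomain A] : Prop :=
  ∀ (P : Ideal A) (hP : P.IsPrime),
    haveI := hP
    letI : IsDomain (Localization.AtPrime P) := IsLocalization.isDomain_of_local_atPrime hP
    ValuationRing (Localization.AtPrime P)

set_option linter.unusedSectionVars false
set_option maxHeartbeats 1000000
set_option synthInstance.maxHeartbeats 400000

section Aux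

variable {R : Type*} [CommRing R] [IsDomain R]

open Polynomial in
lemma isIntegral_of_mem_both {R : Type*} [CommRing R] [IsDomain R]
    {u z : FractionRing R} (hu : u ≠ 0) (p q : Polynomial R)
    (hp : z = Polynomial.aeval u p) (hq : z = Polynomial.aeval u⁻¹ q) :
    IsIntegral R z := by
  set m := p.natDegree
  set l := q.natDegree
  have hpow : ∀ {i j : ℕ}, j ≤ i → u⁻¹ ^ j * u ^ i = u ^ (i - j) := by
    intro i j hji
    rw [inv_pow, inv_mul_eq_iff_eq_mul₀ (pow_ne_zero _ hu), ← pow_add]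
    congr 1; omega
  set G : Set (FractionRing R) := (fun i : ℕ => u ^ i * u⁻¹ ^ l) '' (Set.Iic (m + l)) with hG
  set N : Submodule R (FractionRing R) := Submodule.span R G with hN
  have hFG : N.FG := Submodule.fg_span ((Set.finite_Iic _).image _)
  have hone : (1 : FractionRing R) ∈ N := by
    apply Submodule.subset_span
    refine ⟨l, by simp, ?_⟩
    show u ^ l * u⁻¹ ^ l = 1
    rw [← mul_pow, mul_inv_cancel₀ hu, one_pow]
  have hbot : N ≠ ⊥ := fun h => one_ne_zero ((Submodule.mem_bot R).mp (h ▸ hone))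
  have hgen : ∀ g ∈ G, z * g ∈ N := by
    rintro g ⟨i, hi, rfl⟩
    simp only [Set.mem_Iic] at hi
    show z * (u ^ i * u⁻¹ ^ l) ∈ N
    by_cases hil : i < l
    · rw [hp, Polynomial.aeval_eq_sum_range, Finset.sum_mul]
      apply Submodule.sum_mem
      intro j hj
      simp only [Finset.mem_range] at hj
      rw [smul_mul_assoc]
      apply Submodule.smul_mem
      apply Submodule.subset_span
      refine ⟨j + i, by simp; omega, ?_⟩
      show u ^ (j + i) * u⁻¹ ^ l = u ^ j * (u ^ i * u⁻¹ ^ l)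
      rw [← mul_assoc, ← pow_add]
    · push_neg at hil
      rw [hq, Polynomial.aeval_eq_sum_range, Finset.sum_mul]
      apply Submodule.sum_mem
      intro j hj
      simp only [Finset.mem_range] at hj
      rw [smul_mul_assoc]
      apply Submodule.smul_mem
      apply Submodule.subset_span
      refine ⟨i - j, by simp; omega, ?_⟩
      show u ^ (i - j) * u⁻¹ ^ l = u⁻¹ ^ j * (u ^ i * u⁻¹ ^ l)
      rw [← mul_assoc, hpow (by omega)]
  have hx : ∀ n ∈ N, z • n ∈ N := by
    intro n hn
    induction hn using Submodule.span_induction with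
    | mem x hxG => simpa using hgen x hxG
    | zero => simpa using N.zero_mem
    | add x y _ _ hx hy => rw [smul_add]; exact N.add_mem hx hy
    | smul r x _ hx => rw [smul_comm]; exact N.smul_mem r hx
  exact isIntegral_of_smul_mem_submodule N hbot hFG z hx

open Polynomial Finset in
lemma key_dichotomy {R : Type*} [CommRing R] [IsDomain R] [IsIntegrallyClosed R]
    {P : Ideal R} (hP : P.IsPrime) {u : FractionRing R} (hu : u ≠ 0)
    (f : Polynomial R) (hf : Polynomial.aeval u f = 0) {j : ℕ} (hj : f.coeff j ∉ P) :
    u ∈ locSet R (FractionRing R) P ∨ u⁻¹ ∈ locSet R (FractionRing R) P := by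
  by_contra hcon
  push_neg at hcon
  obtain ⟨hc1, hc2⟩ := hcon
  set n := f.natDegree with hn
  have hinj := IsFractionRing.injective R (FractionRing R)
  have huinv : u⁻¹ * u = 1 := inv_mul_cancel₀ hu
  rcases Nat.eq_zero_or_pos n with hn0 | hnpos
  · apply hj
    rcases Nat.eq_zero_or_pos j with rfl | hjpos
    · have h0 : f.coeff 0 = 0 := by
        have h2 := hf
        rw [Polynomial.eq_C_of_natDegree_eq_zero hn0, aeval_C] at h2
        exact hinj (by simpa using h2)
      rw [h0]; exact P.zero_mem
    · rw [Polynomial.coeff_eq_zero_of_natDegree_lt (by omega)]; exact P.zero_mem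
  set g : ℕ → FractionRing R := fun i => algebraMap R (FractionRing R) (f.coeff i) * u ^ i with hg
  set h : ℕ → FractionRing R := fun k =>
    ∑ j ∈ range (k + 1), algebraMap R (FractionRing R) (f.coeff (n - j)) * u ^ (k - j) with hh
  have hpow : ∀ {i j : ℕ}, j ≤ i → u ^ j * u⁻¹ ^ i = u⁻¹ ^ (i - j) := by
    intro i j hji
    have e : i = j + (i - j) := by omega
    calc u ^ j * u⁻¹ ^ i = u ^ j * (u⁻¹ ^ j * u⁻¹ ^ (i - j)) := by rw [← pow_add, ← e]
      _ = (u * u⁻¹) ^ j * u⁻¹ ^ (i - j) := by rw [mul_pow]; ring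
      _ = u⁻¹ ^ (i - j) := by rw [mul_inv_cancel₀ hu, one_pow, one_mul]
  have hdec : ∀ {m : ℕ}, 1 ≤ m → u⁻¹ ^ m * u = u⁻¹ ^ (m - 1) := by
    intro m hm
    have e : m = (m - 1) + 1 := by omega
    rw [e, pow_succ, mul_assoc, huinv, mul_one, Nat.add_sub_cancel]
  have htot : ∑ i ∈ range (n + 1), g i = 0 := by
    rw [← hf, Polynomial.aeval_eq_sum_range]
    apply Finset.sum_congr rfl
    intro i _
    show algebraMap R (FractionRing R) (f.coeff i) * u ^ i = f.coeff i • u ^ i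
    rw [Algebra.smul_def]
  have hzero : h 0 = algebraMap R (FractionRing R) (f.coeff n) := by
    simp only [hh]; simp
  have hstep : ∀ k : ℕ, h (k + 1) = h k * u +
      algebraMap R (FractionRing R) (f.coeff (n - (k + 1))) := by
    intro k
    simp only [hh]
    rw [Finset.sum_range_succ]
    simp only [Nat.sub_self, pow_zero, mul_one]
    congr 1
    rw [Finset.sum_mul]
    apply Finset.sum_congr rfl
    intro i hi
    simp only [Finset.mem_range] at hi
    rw [mul_assoc, ← pow_succ]
    congr 2
    omega
  have hS : ∀ k, k ≤ n → h k * u ^ (n - k) = -∑ i ∈ range (n - k), g i := by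
    intro k
    induction k with
    | zero =>
      intro _
      rw [hzero, Nat.sub_zero]
      have h2 : (∑ i ∈ range n, g i) + g n = 0 := by rw [← Finset.sum_range_succ]; exact htot
      have h3 : g n = -∑ i ∈ range n, g i := by linear_combination h2
      rw [← h3]
    | succ k ih =>
      intro hk
      have ih' := ih (by omega)
      rw [hstep k, add_mul, mul_assoc]
      have e1 : u * u ^ (n - (k + 1)) = u ^ (n - k) := by rw [← pow_succ']; congr 1; omega
      rw [e1, ih']
      have e2 : n - k = (n - (k + 1)) + 1 := by omega
      rw [e2, Finset.sum_range_succ]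
      have e3 : g (n - (k + 1)) =
        algebraMap R (FractionRing R) (f.coeff (n - (k + 1))) * u ^ (n - (k + 1)) := rfl
      rw [← e3]; ring
  have hRu : ∀ k, h k = Polynomial.aeval u
      (∑ j ∈ range (k + 1), Polynomial.C (f.coeff (n - j)) * Polynomial.X ^ (k - j)) := by
    intro k
    rw [map_sum]
    simp only [hh]
    exact Finset.sum_congr rfl (fun i _ => by rw [map_mul, aeval_C, map_pow, aeval_X])
  have hcancel : ∀ {w : FractionRing R} {e : ℕ}, w * u ^ e * u⁻¹ ^ e = w := by
    intro w e
    rw [mul_assoc, ← mul_pow, mul_inv_cancel₀ hu, one_pow, mul_one]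
  have hRuinv : ∀ k, k < n → h k = Polynomial.aeval u⁻¹
      (-∑ i ∈ range (n - k), Polynomial.C (f.coeff i) * Polynomial.X ^ (n - k - i)) := by
    intro k hk
    have h2 : h k = (-∑ i ∈ range (n - k), g i) * u⁻¹ ^ (n - k) := by
      rw [← hS k (le_of_lt hk), hcancel]
    rw [h2, map_neg, map_sum, neg_mul, Finset.sum_mul]
    congr 1
    apply Finset.sum_congr rfl
    intro i hi
    simp only [Finset.mem_range] at hi
    rw [map_mul, aeval_C, map_pow, aeval_X]
    show algebraMap R (FractionRing R) (f.coeff i) * u ^ i * u⁻¹ ^ (n - k) = _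
    rw [mul_assoc, hpow (by omega)]
  have hRuinv' : ∀ k, k < n → h k * u = Polynomial.aeval u⁻¹
      (-∑ i ∈ range (n - k), Polynomial.C (f.coeff i) * Polynomial.X ^ (n - k - i - 1)) := by
    intro k hk
    rw [hRuinv k hk, map_neg, map_neg, map_sum, map_sum, neg_mul, Finset.sum_mul]
    congr 1
    apply Finset.sum_congr rfl
    intro i hi
    simp only [Finset.mem_range] at hi
    rw [map_mul, aeval_C, map_pow, aeval_X, map_mul, aeval_C, map_pow, aeval_X, mul_assoc,
      hdec (by omega)]
  have hmem : ∀ k, k < n → ∃ b b' : R,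
      algebraMap R (FractionRing R) b = h k ∧ algebraMap R (FractionRing R) b' = h k * u ∧
      b ∈ P ∧ b' ∈ P := by
    intro k hk
    have int1 : IsIntegral R (h k) :=
      isIntegral_of_mem_both hu _ _ (hRu k) (hRuinv k hk)
    have int2 : IsIntegral R (h k * u) := by
      refine isIntegral_of_mem_both hu
        ((∑ j ∈ range (k + 1), Polynomial.C (f.coeff (n - j)) * Polynomial.X ^ (k - j)) *
          Polynomial.X) _ ?_ (hRuinv' k hk)
      rw [map_mul, aeval_X, ← hRu k]
    obtain ⟨b, hb⟩ := IsIntegrallyClosed.isIntegral_iff.mp int1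
    obtain ⟨b', hb'⟩ := IsIntegrallyClosed.isIntegral_iff.mp int2
    refine ⟨b, b', hb, hb', ?_, ?_⟩
    · by_contra hbP
      exact hc1 ⟨b, hbP, b', by rw [mul_comm, hb, hb']⟩
    · by_contra hbP'
      exact hc2 ⟨b', hbP', b, by rw [hb', hb, mul_comm (h k) u, ← mul_assoc, huinv, one_mul]⟩
  apply hj
  rcases lt_or_ge n j with hjn | hjn
  · rw [Polynomial.coeff_eq_zero_of_natDegree_lt hjn]; exact P.zero_mem
  rcases Nat.eq_zero_or_pos (n - j) with hnj | hnj
  · obtain ⟨b, b', hb, hb', hbP, hbP'⟩ := hmem 0 hnpos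
    have hbn : b = f.coeff n := hinj (by rw [hb, hzero])
    have hjn' : j = n := by omega
    rw [hjn', ← hbn]; exact hbP
  rcases Nat.lt_or_ge (n - j) n with hlt | hge
  · set k := n - j with hkdef
    obtain ⟨b, b', hb, hb', hbP, hbP'⟩ := hmem k hlt
    obtain ⟨c, c', hcb, hcb', hcP, hcP'⟩ := hmem (k - 1) (by omega)
    have e5 : (k - 1) + 1 = k := by omega
    have hsk := hstep (k - 1)
    rw [e5] at hsk
    have hco : f.coeff (n - k) = b - c' := by
      apply hinj
      rw [map_sub, hb, hcb', hsk]
      ring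
    have e6 : n - k = j := by omega
    rw [← e6, hco]
    exact P.sub_mem hbP hcP'
  · have hj0 : j = 0 := by omega
    obtain ⟨b, b', hb, hb', hbP, hbP'⟩ := hmem (n - 1) (by omega)
    have hsn := hstep (n - 1)
    have e7 : n - 1 + 1 = n := by omega
    rw [e7] at hsn
    have hhn : h n = 0 := by
      have h9 := hS n (le_refl n)
      simpa using h9
    have hco : f.coeff 0 = -b' := by
      apply hinj
      rw [map_neg, hb']
      rw [hhn] at hsn
      have e8 : n - n = 0 := by omega
      rw [e8] at hsn
      linear_combination -hsn
    rw [hj0, hco]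
    exact P.neg_mem hbP'

lemma zero_mem_locSet {P : Ideal R} (hP : P.IsPrime) :
    (0 : FractionRing R) ∈ locSet R (FractionRing R) P :=
  ⟨1, fun h => hP.ne_top (Ideal.eq_top_iff_one P |>.mpr h), 0, by simp⟩

lemma not_mem_of_mul_not_mem {P : Ideal R} (hP : P.IsPrime) {t s : R}
    (ht : t ∉ P) (hs : s ∉ P) : t * s ∉ P :=
  fun h => (hP.mem_or_mem h).elim ht hs

/-- locSet as a subalgebra. -/
def locSub (P : Ideal R) (hP : P.IsPrime) : Subalgebra R (FractionRing R) where
  carrier := locSet R (FractionRing R) P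
  algebraMap_mem' := fun r => ⟨1, fun h => hP.ne_top (Ideal.eq_top_iff_one P |>.mpr h), r, by simp⟩
  add_mem' := by
    rintro x y ⟨s₁, hs₁, r₁, h₁⟩ ⟨s₂, hs₂, r₂, h₂⟩
    refine ⟨s₁ * s₂, not_mem_of_mul_not_mem hP hs₁ hs₂, r₁ * s₂ + r₂ * s₁, ?_⟩
    rw [map_mul, map_add, map_mul, map_mul, add_mul]
    rw [show x * (algebraMap R (FractionRing R) s₁ * algebraMap R (FractionRing R) s₂)
        = (x * algebraMap R (FractionRing R) s₁) * algebraMap R (FractionRing R) s₂ by ring, h₁]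
    rw [show y * (algebraMap R (FractionRing R) s₁ * algebraMap R (FractionRing R) s₂)
        = (y * algebraMap R (FractionRing R) s₂) * algebraMap R (FractionRing R) s₁ by ring, h₂]
  mul_mem' := by
    rintro x y ⟨s₁, hs₁, r₁, h₁⟩ ⟨s₂, hs₂, r₂, h₂⟩
    refine ⟨s₁ * s₂, not_mem_of_mul_not_mem hP hs₁ hs₂, r₁ * r₂, ?_⟩
    rw [map_mul, map_mul, ← h₁, ← h₂]; ring

lemma dichotomy_of_valuation {P : Ideal R} (hP : P.IsPrime)
    (hV : letI := IsLocalization.isDomain_of_local_atPrime hP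
      ValuationRing (Localization.AtPrime P)) (x : FractionRing R) :
    x ∈ locSet R (FractionRing R) P ∨ x⁻¹ ∈ locSet R (FractionRing R) P := by
  letI := IsLocalization.isDomain_of_local_atPrime hP
  obtain ⟨r₁, r₂, hr₂, rfl⟩ := IsFractionRing.div_surjective (A := R) x
  obtain ⟨c, hc⟩ := hV.cond' (algebraMap R (Localization.AtPrime P) r₁)
    (algebraMap R (Localization.AtPrime P) r₂)
  obtain ⟨⟨r, s⟩, rfl⟩ := IsLocalization.mk'_surjective P.primeCompl c
  have hr₂0 : r₂ ≠ 0 := nonZeroDivisors.ne_zero hr₂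
  have hr₂0' : algebraMap R (FractionRing R) r₂ ≠ 0 := by
    simpa using fun h => hr₂0 (IsFractionRing.injective R (FractionRing R) (by simpa using h))
  rcases hc with hc | hc
  · -- r₁ * (r/s) = r₂ : gives x⁻¹ ∈ locSet
    have h2 := congrArg (· * algebraMap R (Localization.AtPrime P) s) hc
    simp only [mul_assoc, IsLocalization.mk'_spec] at h2
    rw [← map_mul, ← map_mul] at h2
    obtain ⟨t, ht⟩ := (IsLocalization.eq_iff_exists P.primeCompl _).mp h2
    have htR : (t : R) * (r₁ * r) = t * (r₂ * s) := ht
    by_cases hr₁ : r₁ = 0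
    · left; simp only [hr₁, map_zero, zero_div]; exact zero_mem_locSet hP
    right
    have hr₁' : algebraMap R (FractionRing R) r₁ ≠ 0 := by
      simpa using fun h => hr₁ (IsFractionRing.injective R (FractionRing R) (by simpa using h))
    refine ⟨t * s, not_mem_of_mul_not_mem hP t.2 s.2, t * r, ?_⟩
    rw [inv_div, div_mul_eq_mul_div, div_eq_iff hr₁', ← map_mul, ← map_mul]
    exact congrArg _ (by linear_combination -htR)
  · -- r₂ * (r/s) = r₁ : x ∈ locSet
    have h2 := congrArg (· * algebraMap R (Localization.AtPrime P) s) hc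
    simp only [mul_assoc, IsLocalization.mk'_spec] at h2
    rw [← map_mul, ← map_mul] at h2
    obtain ⟨t, ht⟩ := (IsLocalization.eq_iff_exists P.primeCompl _).mp h2
    have htR : (t : R) * (r₂ * r) = t * (r₁ * s) := ht
    left
    refine ⟨t * s, not_mem_of_mul_not_mem hP t.2 s.2, t * r, ?_⟩
    rw [div_mul_eq_mul_div, div_eq_iff hr₂0', ← map_mul, ← map_mul]
    exact congrArg _ (by linear_combination -htR)

lemma valuation_of_dichotomy {P : Ideal R} (hP : P.IsPrime)
    (h : ∀ x : FractionRing R,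
      x ∈ locSet R (FractionRing R) P ∨ x⁻¹ ∈ locSet R (FractionRing R) P) :
    letI := IsLocalization.isDomain_of_local_atPrime hP
    ValuationRing (Localization.AtPrime P) := by
  letI := IsLocalization.isDomain_of_local_atPrime hP
  have key : ∀ r₁ r₂ : R, ∃ c : Localization.AtPrime P,
      algebraMap R (Localization.AtPrime P) r₁ * c = algebraMap R (Localization.AtPrime P) r₂ ∨
      algebraMap R (Localization.AtPrime P) r₂ * c = algebraMap R (Localization.AtPrime P) r₁ := by
    intro r₁ r₂
    by_cases hr₂ : r₂ = 0
    · exact ⟨0, Or.inl (by simp [hr₂])⟩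
    by_cases hr₁ : r₁ = 0
    · exact ⟨0, Or.inr (by simp [hr₁])⟩
    have hr₁' : algebraMap R (FractionRing R) r₁ ≠ 0 := by
      simpa using fun hh => hr₁ (IsFractionRing.injective R (FractionRing R) (by simpa using hh))
    have hr₂' : algebraMap R (FractionRing R) r₂ ≠ 0 := by
      simpa using fun hh => hr₂ (IsFractionRing.injective R (FractionRing R) (by simpa using hh))
    rcases h (algebraMap R (FractionRing R) r₁ / algebraMap R (FractionRing R) r₂) with
      ⟨s, hs, r, hx⟩ | ⟨s, hs, r, hx⟩
    · -- (r₁/r₂) * s = r, so r₁ s = r r₂ : Or.inr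
      rw [div_mul_eq_mul_div, div_eq_iff hr₂', ← map_mul, ← map_mul] at hx
      have hR : r₁ * s = r * r₂ := IsFractionRing.injective R (FractionRing R) hx
      refine ⟨IsLocalization.mk' (Localization.AtPrime P) r (⟨s, hs⟩ : P.primeCompl), Or.inr ?_⟩
      rw [IsLocalization.mul_mk'_eq_mk'_of_mul, IsLocalization.mk'_eq_iff_eq_mul, ← map_mul]
      exact congrArg _ (by linear_combination -hR)
    · rw [inv_div, div_mul_eq_mul_div, div_eq_iff hr₁', ← map_mul, ← map_mul] at hx
      have hR : r₂ * s = r * r₁ := IsFractionRing.injective R (FractionRing R) hx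
      refine ⟨IsLocalization.mk' (Localization.AtPrime P) r (⟨s, hs⟩ : P.primeCompl), Or.inl ?_⟩
      rw [IsLocalization.mul_mk'_eq_mk'_of_mul, IsLocalization.mk'_eq_iff_eq_mul, ← map_mul]
      exact congrArg _ (by linear_combination -hR)
  refine { cond' := ?_ }
  intro a b
  obtain ⟨⟨r₁, s₁⟩, rfl⟩ := IsLocalization.mk'_surjective P.primeCompl a
  obtain ⟨⟨r₂, s₂⟩, rfl⟩ := IsLocalization.mk'_surjective P.primeCompl b
  obtain ⟨c, hc | hc⟩ := key r₁ r₂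
  · refine ⟨c * algebraMap R (Localization.AtPrime P) s₁ *
      IsLocalization.mk' (Localization.AtPrime P) 1 s₂, Or.inl ?_⟩
    dsimp only
    rw [IsLocalization.mk'_eq_mul_mk'_one r₁ s₁, IsLocalization.mk'_eq_mul_mk'_one r₂ s₂]
    calc algebraMap R (Localization.AtPrime P) r₁ * IsLocalization.mk' (Localization.AtPrime P) 1 s₁
          * (c * algebraMap R (Localization.AtPrime P) s₁ *
          IsLocalization.mk' (Localization.AtPrime P) 1 s₂)
        = (algebraMap R (Localization.AtPrime P) r₁ * c) *
          (IsLocalization.mk' (Localization.AtPrime P) 1 s₁ *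
            algebraMap R (Localization.AtPrime P) s₁) *
          IsLocalization.mk' (Localization.AtPrime P) 1 s₂ := by ring
      _ = algebraMap R (Localization.AtPrime P) r₂ *
          IsLocalization.mk' (Localization.AtPrime P) 1 s₂ := by
          rw [hc, IsLocalization.mk'_spec, map_one, mul_one]
  · refine ⟨c * algebraMap R (Localization.AtPrime P) s₂ *
      IsLocalization.mk' (Localization.AtPrime P) 1 s₁, Or.inr ?_⟩
    dsimp only
    rw [IsLocalization.mk'_eq_mul_mk'_one r₁ s₁, IsLocalization.mk'_eq_mul_mk'_one r₂ s₂]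
    calc algebraMap R (Localization.AtPrime P) r₂ * IsLocalization.mk' (Localization.AtPrime P) 1 s₂
          * (c * algebraMap R (Localization.AtPrime P) s₂ *
          IsLocalization.mk' (Localization.AtPrime P) 1 s₁)
        = (algebraMap R (Localization.AtPrime P) r₂ * c) *
          (IsLocalization.mk' (Localization.AtPrime P) 1 s₂ *
            algebraMap R (Localization.AtPrime P) s₂) *
          IsLocalization.mk' (Localization.AtPrime P) 1 s₁ := by ring
      _ = algebraMap R (Localization.AtPrime P) r₁ *
          IsLocalization.mk' (Localization.AtPrime P) 1 s₁ := by
          rw [hc, IsLocalization.mk'_spec, map_one, mul_one]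

open Polynomial in
lemma prufer_of_sqqr [IsIntegrallyClosed R] (hs : IsSQQR R) : IsPrufer R := by
  intro P hP
  apply valuation_of_dichotomy hP
  intro x
  by_cases hx : x = 0
  · left; rw [hx]; exact zero_mem_locSet hP
  -- Step 1: x ∈ R[x + x²]
  obtain ⟨Ps, hPs, hEq⟩ := hs (x + x ^ 2)
  have hxadj : x ∈ (↑(Algebra.adjoin R {x + x ^ 2} : Subalgebra R (FractionRing R)) :
      Set (FractionRing R)) := by
    rw [hEq]
    apply Set.mem_iInter₂.mpr
    intro Q hQ
    have hQp : Q.IsPrime := hPs Q hQ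
    have ht : (x + x ^ 2) ∈ locSet R (FractionRing R) Q := by
      have h1 : (x + x ^ 2) ∈ (↑(Algebra.adjoin R {x + x ^ 2} :
          Subalgebra R (FractionRing R)) : Set (FractionRing R)) :=
        Algebra.self_mem_adjoin_singleton R _
      rw [hEq] at h1
      exact Set.mem_iInter₂.mp h1 Q hQ
    obtain ⟨s, hsQ, r, hsr⟩ := ht
    have hint : IsIntegral R (algebraMap R (FractionRing R) s * x) := by
      refine ⟨X ^ 2 + C s * X - C (s * r), by monicity!, ?_⟩
      rw [← aeval_def]
      simp only [map_sub, map_add, map_pow, aeval_X, aeval_C, map_mul]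
      linear_combination (algebraMap R (FractionRing R) s) * hsr
    obtain ⟨w, hw⟩ := IsIntegrallyClosed.isIntegral_iff.mp hint
    exact ⟨s, hsQ, w, by rw [mul_comm]; exact hw.symm⟩
  rw [SetLike.mem_coe, Algebra.adjoin_singleton_eq_range_aeval, AlgHom.mem_range] at hxadj
  obtain ⟨q, hq⟩ := hxadj
  -- Step 2: build f with unit-content-mod-P
  set f : Polynomial R := q.comp (X + X ^ 2) - X with hfdef
  have hfx : Polynomial.aeval x f = 0 := by
    rw [hfdef, map_sub, Polynomial.aeval_comp, aeval_X]
    simp only [map_add, map_pow, aeval_X]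
    rw [hq, sub_self]
  have hcoeff : ∃ j : ℕ, f.coeff j ∉ P := by
    by_contra hall
    push_neg at hall
    have hmap : f.map (Ideal.Quotient.mk P) = 0 := by
      apply Polynomial.ext
      intro i
      simp only [Polynomial.coeff_map, Polynomial.coeff_zero, Ideal.Quotient.eq_zero_iff_mem]
      exact hall i
    rw [hfdef, Polynomial.map_sub, Polynomial.map_comp] at hmap
    simp only [Polynomial.map_add, Polynomial.map_pow, Polynomial.map_X] at hmap
    have hcomp : ((q.map (Ideal.Quotient.mk P)).comp (X + X ^ 2) : Polynomial (R ⧸ P)) = X := by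
      linear_combination hmap
    have hdeg := congrArg Polynomial.natDegree hcomp
    rw [Polynomial.natDegree_comp, Polynomial.natDegree_X] at hdeg
    have h2 : (X + X ^ 2 : Polynomial (R ⧸ P)).natDegree = 2 := by
      compute_degree!
    rw [h2] at hdeg
    omega
  obtain ⟨j, hj⟩ := hcoeff
  exact key_dichotomy hP hx f hfx hj

lemma sqqr_of_prufer (hp : IsPrufer R) : IsSQQR R := by
  intro u
  set T : Subalgebra R (FractionRing R) := Algebra.adjoin R {u} with hT
  refine ⟨{P | P.IsPrime ∧ (↑T : Set (FractionRing R)) ⊆ locSet R (FractionRing R) P},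
    fun P hP => hP.1, ?_⟩
  apply Set.Subset.antisymm
  · intro x hx
    apply Set.mem_iInter₂.mpr
    intro Q hQ
    exact hQ.2 hx
  · intro x hx
    by_contra hxT
    -- the conductor ideal of x into T
    set I : Ideal T :=
      { carrier := {a : T | (a : FractionRing R) * x ∈ T},
        zero_mem' := by simpa using T.zero_mem
        add_mem' := by
          rintro a b ha hb
          show ((a + b : T) : FractionRing R) * x ∈ T
          push_cast
          rw [add_mul]
          exact T.add_mem ha hb
        smul_mem' := by
          rintro c a ha
          show ((c * a : T) : FractionRing R) * x ∈ T
          push_cast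
          rw [mul_assoc]
          exact T.mul_mem c.2 ha } with hI
    have hItop : I ≠ ⊤ := by
      intro htop
      have h1 : (1 : T) ∈ I := htop ▸ Submodule.mem_top
      have : ((1 : T) : FractionRing R) * x ∈ T := h1
      rw [OneMemClass.coe_one, one_mul] at this
      exact hxT this
    obtain ⟨M, hM, hIM⟩ := Ideal.exists_le_maximal I hItop
    set P : Ideal R := M.comap (algebraMap R T) with hP
    haveI := hM.isPrime
    haveI hPp : P.IsPrime := Ideal.IsPrime.comap _
    -- u ∈ locSet P
    have hu : u ∈ locSet R (FractionRing R) P := by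
      by_cases hu0 : u = 0
      · rw [hu0]; exact zero_mem_locSet hPp
      rcases dichotomy_of_valuation hPp (hp P hPp) u with h | ⟨s, hs, r, hr⟩
      · exact h
      -- u⁻¹ * s = r
      have hsx : algebraMap R (FractionRing R) s = u * algebraMap R (FractionRing R) r := by
        rw [← hr]
        field_simp
      by_cases hrP : r ∈ P
      · exfalso
        have hrM : algebraMap R T r ∈ M := hrP
        have huT : (⟨u, Algebra.self_mem_adjoin_singleton R u⟩ : T) * algebraMap R T r ∈ M :=
          M.mul_mem_left _ hrM
        have hcoe : (⟨u, Algebra.self_mem_adjoin_singleton R u⟩ : T) * algebraMap R T r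
            = algebraMap R T s := by
          apply Subtype.coe_injective
          push_cast
          exact hsx.symm
        rw [hcoe] at huT
        exact hs huT
      · exact ⟨r, hrP, s, hsx.symm⟩
    -- T ⊆ locSet P
    have hTP : (↑T : Set (FractionRing R)) ⊆ locSet R (FractionRing R) P := by
      have hle : T ≤ locSub P hPp := by
        rw [hT]
        apply Algebra.adjoin_le
        intro y hy
        rw [Set.mem_singleton_iff] at hy
        rw [hy]
        exact hu
      exact fun y hy => hle hy
    -- x ∈ locSet P, contradiction with M maximal
    have hxP : x ∈ locSet R (FractionRing R) P :=
      Set.mem_iInter₂.mp hx P ⟨hPp, hTP⟩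
    obtain ⟨s, hs, r, hr⟩ := hxP
    have hsI : algebraMap R T s ∈ I := by
      show ((algebraMap R T s : T) : FractionRing R) * x ∈ T
      rw [show ((algebraMap R T s : T) : FractionRing R)
        = algebraMap R (FractionRing R) s from (T.val.commutes s), mul_comm, hr]
      exact T.algebraMap_mem r
    exact hs (hIM hsI)

end Aux

theorem stmt6 (R : Type*) [CommRing R] [IsDomain R] [IsIntegrallyClosed R] :
    IsPrufer R ↔ IsSQQR R :=
  ⟨fun h => sqqr_of_prufer h, fun h => prufer_of_sqqr h⟩

end
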